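/- arXiv:1507.03432 — 4 statements merged into one kernel-verified Lean document; each statement's English description precedes it below -/
import Mathlib

section
/- Let m ∈ ℕ, let A⁰, A¹, B⁰, B¹ be real m×m matrices, let c⁰ : ℝᵐ → ℝᵐ be twice continuously differentiable and c¹ : ℝᵐ → ℝᵐ be continuously differentiable. Let Φ⁰, Φ¹ : ℝ² → ℝᵐ be continuously differentiable functions of (s,t) satisfying, everywhere, the limit system A⁰·∂_tΦ⁰ + B⁰·∂_sΦ⁰ + c⁰(Φ⁰) = 0 and the first-order correction system A⁰·∂_tΦ¹ + B⁰·∂_sΦ¹ + (Dc⁰)(Φ⁰)·Φ¹ = −(A¹·∂_tΦ⁰ + B¹·∂_sΦ⁰ + c¹(Φ⁰)), where (Dc⁰)(Φ⁰) is the Jacobi matrix of c⁰ at Φ⁰. Then for every compact set Q ⊆ ℝ² there exists C ≥ 0 such that for all ε ∈ [0,1] and all (s,t) ∈ Q the function Φ_ε := Φ⁰ + ε²Φ¹ satisfies ‖(A⁰ + ε²A¹)·∂_tΦ_ε + (B⁰ + ε²B¹)·∂_sΦ_ε + c⁰(Φ_ε) + ε² c¹(Φ_ε)‖ ≤ C ε⁴.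 -/
noncomputable section

/-- Partial derivative with respect to the time variable `t` (second component). -/
def pt {E : Type*} [NormedAddCommGroup E] [NormedSpace ℝ E]
    (f : ℝ × ℝ → E) (p : ℝ × ℝ) : E :=
  deriv (fun t => f (p.1, t)) p.2

/-- Partial derivative with respect to the space variable `s` (first component). -/
def ps {E : Type*} [NormedAddCommGroup E] [NormedSpace ℝ E]
    (f : ℝ × ℝ → E) (p : ℝ × ℝ) : E :=
  deriv (fun s => f (s, p.2)) p.1

lemma pt_eq_fderiv {E : Type*} [NormedAddCommGroup E] [NormedSpace ℝ E]
    {f : ℝ × ℝ → E} (hf : Differentiable ℝ f) (p : ℝ × ℝ) :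
    pt f p = fderiv ℝ f p (0, 1) := by
  have h1 : HasDerivAt (fun t : ℝ => ((p.1 : ℝ), t)) ((0 : ℝ), (1 : ℝ)) p.2 :=
    (hasDerivAt_const p.2 p.1).prodMk (hasDerivAt_id p.2)
  have h2 := ((hf (p.1, p.2)).hasFDerivAt).comp_hasDerivAt p.2 h1
  have h3 := h2.deriv
  exact h3

lemma ps_eq_fderiv {E : Type*} [NormedAddCommGroup E] [NormedSpace ℝ E]
    {f : ℝ × ℝ → E} (hf : Differentiable ℝ f) (p : ℝ × ℝ) :
    ps f p = fderiv ℝ f p (1, 0) := by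
  have h1 : HasDerivAt (fun s : ℝ => (s, (p.2 : ℝ))) ((1 : ℝ), (0 : ℝ)) p.1 :=
    (hasDerivAt_id p.1).prodMk (hasDerivAt_const p.1 p.2)
  have h2 := ((hf (p.1, p.2)).hasFDerivAt).comp_hasDerivAt p.1 h1
  have h3 := h2.deriv
  exact h3

lemma exists_nonneg_bound {α : Type*} [TopologicalSpace α] {E : Type*}
    [NormedAddCommGroup E] {s : Set α} (hs : IsCompact s) {f : α → E}
    (hf : ContinuousOn f s) : ∃ C : ℝ, 0 ≤ C ∧ ∀ x ∈ s, ‖f x‖ ≤ C := by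
  obtain ⟨C, hC⟩ := hs.exists_bound_of_continuousOn hf
  exact ⟨max C 0, le_max_right _ _, fun x hx => (hC x hx).trans (le_max_left _ _)⟩

/-- If `Φ⁰` solves the limit system and `Φ¹` its first-order correction
system, then `Φ_ε = Φ⁰ + ε²Φ¹` satisfies the ε-dependent system
`A_ε·∂_tΦ_ε + B_ε·∂_sΦ_ε + c_ε(Φ_ε) = 0` up to a residual of order `O(ε⁴)`,
uniformly on compact sets. -/
theorem asymptotic_expansion_exact_fourth_order
    (m : ℕ) (A0 A1 B0 B1 : Matrix (Fin m) (Fin m) ℝ)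
    (c0 : (Fin m → ℝ) → Fin m → ℝ) (hc0 : ContDiff ℝ 2 c0)
    (c1 : (Fin m → ℝ) → Fin m → ℝ) (hc1 : ContDiff ℝ 1 c1)
    (Φ0 Φ1 : ℝ × ℝ → Fin m → ℝ) (hΦ0 : ContDiff ℝ 1 Φ0) (hΦ1 : ContDiff ℝ 1 Φ1)
    (hlimit : ∀ p : ℝ × ℝ,
      A0.mulVec (pt Φ0 p) + B0.mulVec (ps Φ0 p) + c0 (Φ0 p) = 0)
    (hcorr : ∀ p : ℝ × ℝ,
      A0.mulVec (pt Φ1 p) + B0.mulVec (ps Φ1 p) + (fderiv ℝ c0 (Φ0 p)) (Φ1 p)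
        = -(A1.mulVec (pt Φ0 p) + B1.mulVec (ps Φ0 p) + c1 (Φ0 p))) :
    ∀ Q : Set (ℝ × ℝ), IsCompact Q →
      ∃ C : ℝ, 0 ≤ C ∧ ∀ ε ∈ Set.Icc (0:ℝ) 1, ∀ p ∈ Q,
        ‖(A0 + ε ^ 2 • A1).mulVec (pt (fun q => Φ0 q + ε ^ 2 • Φ1 q) p)
            + (B0 + ε ^ 2 • B1).mulVec (ps (fun q => Φ0 q + ε ^ 2 • Φ1 q) p)
            + c0 (Φ0 p + ε ^ 2 • Φ1 p) + ε ^ 2 • c1 (Φ0 p + ε ^ 2 • Φ1 p)‖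
          ≤ C * ε ^ 4 := by
  intro Q hQ
  have dΦ0 : Differentiable ℝ Φ0 := hΦ0.differentiable one_ne_zero
  have dΦ1 : Differentiable ℝ Φ1 := hΦ1.differentiable one_ne_zero
  -- bounds on Φ0, Φ1 over Q
  obtain ⟨K0, hK0n, hK0⟩ := exists_nonneg_bound hQ (hΦ0.continuous.continuousOn (s := Q))
  obtain ⟨K1, hK1n, hK1⟩ := exists_nonneg_bound hQ (hΦ1.continuous.continuousOn (s := Q))
  -- bounds on pt Φ1, ps Φ1 over Q
  have hfd1cont : Continuous (fderiv ℝ Φ1) := hΦ1.continuous_fderiv one_ne_zero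
  obtain ⟨Dt, hDtn, hDt⟩ := exists_nonneg_bound hQ
    (f := fun p => pt Φ1 p)
    (Continuous.continuousOn (by
      have : Continuous fun p => (fderiv ℝ Φ1 p) ((0:ℝ), (1:ℝ)) :=
        hfd1cont.clm_apply continuous_const
      have he : (fun p => pt Φ1 p) = fun p => (fderiv ℝ Φ1 p) ((0:ℝ), (1:ℝ)) := by
        funext p; exact pt_eq_fderiv dΦ1 p
      rw [he]; exact this))
  obtain ⟨Ds, hDsn, hDs⟩ := exists_nonneg_bound hQ
    (f := fun p => ps Φ1 p)
    (Continuous.continuousOn (by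
      have : Continuous fun p => (fderiv ℝ Φ1 p) ((1:ℝ), (0:ℝ)) :=
        hfd1cont.clm_apply continuous_const
      have he : (fun p => ps Φ1 p) = fun p => (fderiv ℝ Φ1 p) ((1:ℝ), (0:ℝ)) := by
        funext p; exact ps_eq_fderiv dΦ1 p
      rw [he]; exact this))
  -- the compact ball S
  set S : Set (Fin m → ℝ) := Metric.closedBall 0 (K0 + K1) with hS
  have hScompact : IsCompact S := isCompact_closedBall _ _
  have hSconvex : Convex ℝ S := convex_closedBall _ _
  -- second derivative bound for c0 on S
  have hc0' : ContDiff ℝ 1 (fderiv ℝ c0) := hc0.fderiv_right (by norm_num)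
  obtain ⟨M2, hM2n, hM2⟩ := exists_nonneg_bound hScompact
    ((hc0'.continuous_fderiv one_ne_zero).continuousOn (s := S))
  -- derivative bound for c1 on S
  obtain ⟨M1, hM1n, hM1⟩ := exists_nonneg_bound hScompact
    ((hc1.continuous_fderiv one_ne_zero).continuousOn (s := S))
  -- operator norms for A1, B1
  set LA1 := (Matrix.mulVecLin A1).toContinuousLinearMap with hLA1
  set LB1 := (Matrix.mulVecLin B1).toContinuousLinearMap with hLB1
  refine ⟨‖LA1‖ * Dt + ‖LB1‖ * Ds + M2 * K1 ^ 2 + M1 * K1, by positivity, ?_⟩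
  rintro ε ⟨hε0, hε1⟩ p hp
  have hε2 : (0:ℝ) ≤ ε ^ 2 := by positivity
  have hε2le : ε ^ 2 ≤ 1 := by nlinarith
  set x : Fin m → ℝ := Φ0 p with hx
  set v : Fin m → ℝ := ε ^ 2 • Φ1 p with hv
  have hvnorm : ‖v‖ ≤ ε ^ 2 * K1 := by
    rw [hv, norm_smul]
    simp only [Real.norm_eq_abs, abs_of_nonneg hε2]
    exact mul_le_mul_of_nonneg_left (hK1 p hp) hε2
  have hxS : x ∈ S := by
    rw [hS, Metric.mem_closedBall, dist_zero_right]
    exact (hK0 p hp).trans (by linarith)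
  have hxvS : x + v ∈ S := by
    rw [hS, Metric.mem_closedBall, dist_zero_right]
    calc ‖x + v‖ ≤ ‖x‖ + ‖v‖ := norm_add_le _ _
      _ ≤ K0 + ε ^ 2 * K1 := add_le_add (hK0 p hp) hvnorm
      _ ≤ K0 + K1 := by nlinarith
  -- partial derivatives of the combined function
  have dcomb : Differentiable ℝ (fun q => Φ0 q + ε ^ 2 • Φ1 q) :=
    dΦ0.add (dΦ1.const_smul (ε ^ 2) : Differentiable ℝ (fun q => ε ^ 2 • Φ1 q))
  have hptc : pt (fun q => Φ0 q + ε ^ 2 • Φ1 q) p = pt Φ0 p + ε ^ 2 • pt Φ1 p := by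
    rw [pt_eq_fderiv dcomb p, pt_eq_fderiv dΦ0 p, pt_eq_fderiv dΦ1 p,
      fderiv_fun_add (g := fun q => ε ^ 2 • Φ1 q) (dΦ0 p) ((dΦ1 p).const_smul (ε ^ 2)),
      fderiv_fun_const_smul (dΦ1 p)]
    simp
  have hpsc : ps (fun q => Φ0 q + ε ^ 2 • Φ1 q) p = ps Φ0 p + ε ^ 2 • ps Φ1 p := by
    rw [ps_eq_fderiv dcomb p, ps_eq_fderiv dΦ0 p, ps_eq_fderiv dΦ1 p,
      fderiv_fun_add (g := fun q => ε ^ 2 • Φ1 q) (dΦ0 p) ((dΦ1 p).const_smul (ε ^ 2)),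
      fderiv_fun_const_smul (dΦ1 p)]
    simp
  -- rearranged equations
  have hC0 : c0 (Φ0 p) = -(A0.mulVec (pt Φ0 p) + B0.mulVec (ps Φ0 p)) :=
    eq_neg_of_add_eq_zero_right (hlimit p)
  have hD : (fderiv ℝ c0 (Φ0 p)) (Φ1 p)
      = -(A1.mulVec (pt Φ0 p) + B1.mulVec (ps Φ0 p) + c1 (Φ0 p))
        - A0.mulVec (pt Φ1 p) - B0.mulVec (ps Φ1 p) := by
    rw [← hcorr p]; abel
  -- key algebraic identity for the residual
  have key : (A0 + ε ^ 2 • A1).mulVec (pt (fun q => Φ0 q + ε ^ 2 • Φ1 q) p)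
        + (B0 + ε ^ 2 • B1).mulVec (ps (fun q => Φ0 q + ε ^ 2 • Φ1 q) p)
        + c0 (Φ0 p + ε ^ 2 • Φ1 p) + ε ^ 2 • c1 (Φ0 p + ε ^ 2 • Φ1 p)
      = ε ^ 4 • (A1.mulVec (pt Φ1 p) + B1.mulVec (ps Φ1 p))
        + (c0 (x + v) - c0 x - (fderiv ℝ c0 x) v)
        + ε ^ 2 • (c1 (x + v) - c1 x) := by
    rw [hptc, hpsc]
    have hfv : (fderiv ℝ c0 x) v = ε ^ 2 • (fderiv ℝ c0 x) (Φ1 p) := by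
      rw [hv, map_smul]
    rw [hx, hv, hfv, hC0, hD]
    simp only [Matrix.add_mulVec, Matrix.mulVec_add, Matrix.mulVec_smul,
      Matrix.smul_mulVec]
    have h4 : (ε ^ 4 : ℝ) = ε ^ 2 * ε ^ 2 := by ring
    rw [h4]
    module
  rw [key]
  -- Lipschitz bound for fderiv c0 on S
  have hdiff_fderiv : ∀ z ∈ S, DifferentiableAt ℝ (fderiv ℝ c0) z :=
    fun z _ => (hc0'.differentiable one_ne_zero) z
  have hLip : ∀ y ∈ S, ‖fderiv ℝ c0 y - fderiv ℝ c0 x‖ ≤ M2 * ‖y - x‖ :=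
    fun y hy => hSconvex.norm_image_sub_le_of_norm_fderiv_le hdiff_fderiv hM2 hxS hy
  -- Taylor remainder bound for c0
  have hTaylor : ‖c0 (x + v) - c0 x - (fderiv ℝ c0 x) v‖ ≤ M2 * ‖v‖ * ‖v‖ := by
    set h : (Fin m → ℝ) → (Fin m → ℝ) := fun y => c0 y - (fderiv ℝ c0 x) y with hh
    have hdc0 : Differentiable ℝ c0 := hc0.differentiable (by norm_num)
    have hhd : ∀ y : Fin m → ℝ, DifferentiableAt ℝ h y :=
      fun y => (hdc0 y).sub ((fderiv ℝ c0 x).differentiableAt)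
    have hfderivh : ∀ y : Fin m → ℝ, fderiv ℝ h y = fderiv ℝ c0 y - fderiv ℝ c0 x := by
      intro y
      rw [hh, fderiv_fun_sub (hdc0 y) ((fderiv ℝ c0 x).differentiableAt),
        (fderiv ℝ c0 x).fderiv]
    have hseg : segment ℝ x (x + v) ⊆ S := hSconvex.segment_subset hxS hxvS
    have hbound : ∀ y ∈ segment ℝ x (x + v), ‖fderiv ℝ h y‖ ≤ M2 * ‖v‖ := by
      intro y hy
      rw [hfderivh y]
      have hyx : ‖y - x‖ ≤ ‖v‖ := by
        obtain ⟨a, b, ha, hb, hab, rfl⟩ := hy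
        have hae : a = 1 - b := by linarith
        have : a • x + b • (x + v) - x = b • v := by
          rw [hae]; module
        rw [this, norm_smul, Real.norm_eq_abs, abs_of_nonneg hb]
        nlinarith [norm_nonneg v]
      calc ‖fderiv ℝ c0 y - fderiv ℝ c0 x‖ ≤ M2 * ‖y - x‖ := hLip y (hseg hy)
        _ ≤ M2 * ‖v‖ := mul_le_mul_of_nonneg_left hyx hM2n
    have := (convex_segment x (x + v)).norm_image_sub_le_of_norm_fderiv_le
      (fun y _ => hhd y) hbound (left_mem_segment ℝ x (x + v))
      (right_mem_segment ℝ x (x + v))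
    have heq : h (x + v) - h x = c0 (x + v) - c0 x - (fderiv ℝ c0 x) v := by
      simp only [hh, map_add]; abel
    rw [heq] at this
    simpa using this
  -- Lipschitz bound for c1
  have hc1Lip : ‖c1 (x + v) - c1 x‖ ≤ M1 * ‖v‖ := by
    have := hSconvex.norm_image_sub_le_of_norm_fderiv_le
      (fun z _ => (hc1.differentiable one_ne_zero) z) hM1 hxS hxvS
    simpa using this
  -- bounds for the matrix terms
  have hA1 : ‖A1.mulVec (pt Φ1 p)‖ ≤ ‖LA1‖ * Dt := by
    have h1 : A1.mulVec (pt Φ1 p) = LA1 (pt Φ1 p) := rfl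
    rw [h1]
    calc ‖LA1 (pt Φ1 p)‖ ≤ ‖LA1‖ * ‖pt Φ1 p‖ := LA1.le_opNorm _
      _ ≤ ‖LA1‖ * Dt := mul_le_mul_of_nonneg_left (hDt p hp) (norm_nonneg _)
  have hB1 : ‖B1.mulVec (ps Φ1 p)‖ ≤ ‖LB1‖ * Ds := by
    have h1 : B1.mulVec (ps Φ1 p) = LB1 (ps Φ1 p) := rfl
    rw [h1]
    calc ‖LB1 (ps Φ1 p)‖ ≤ ‖LB1‖ * ‖ps Φ1 p‖ := LB1.le_opNorm _
      _ ≤ ‖LB1‖ * Ds := mul_le_mul_of_nonneg_left (hDs p hp) (norm_nonneg _)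
  -- combine
  have hε4 : (0:ℝ) ≤ ε ^ 4 := by positivity
  calc ‖ε ^ 4 • (A1.mulVec (pt Φ1 p) + B1.mulVec (ps Φ1 p))
        + (c0 (x + v) - c0 x - (fderiv ℝ c0 x) v)
        + ε ^ 2 • (c1 (x + v) - c1 x)‖
      ≤ ‖ε ^ 4 • (A1.mulVec (pt Φ1 p) + B1.mulVec (ps Φ1 p))‖
        + ‖c0 (x + v) - c0 x - (fderiv ℝ c0 x) v‖
        + ‖ε ^ 2 • (c1 (x + v) - c1 x)‖ := norm_add₃_le
    _ ≤ ε ^ 4 * (‖LA1‖ * Dt + ‖LB1‖ * Ds) + M2 * ‖v‖ * ‖v‖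
        + ε ^ 2 * (M1 * ‖v‖) := by
        refine add_le_add (add_le_add ?_ ?_) ?_
        · rw [norm_smul, Real.norm_eq_abs, abs_of_nonneg hε4]
          exact mul_le_mul_of_nonneg_left
            ((norm_add_le _ _).trans (add_le_add hA1 hB1)) hε4
        · exact hTaylor
        · rw [norm_smul, Real.norm_eq_abs, abs_of_nonneg hε2]
          exact mul_le_mul_of_nonneg_left hc1Lip hε2
    _ ≤ (‖LA1‖ * Dt + ‖LB1‖ * Ds + M2 * K1 ^ 2 + M1 * K1) * ε ^ 4 := by
        have hv0 : (0:ℝ) ≤ ‖v‖ := norm_nonneg _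
        nlinarith [mul_le_mul hvnorm hvnorm hv0 (by positivity : (0:ℝ) ≤ ε ^ 2 * K1),
          mul_le_mul_of_nonneg_left hvnorm (mul_nonneg hε2 hM1n),
          mul_nonneg (mul_nonneg (norm_nonneg LA1) hDtn) hε4,
          mul_nonneg (mul_nonneg (norm_nonneg LB1) hDsn) hε4]
end
end

section
/- Let m ∈ ℕ, let A⁰, A¹, B⁰, B¹ be real m×m matrices, let c⁰ : ℝᵐ → ℝᵐ be continuously differentiable and c¹ : ℝᵐ → ℝᵐ be continuous. Let Φ⁰, Φ¹ : ℝ² → ℝᵐ be continuously differentiable, and for each ε ∈ (0,1] let R_ε : ℝ² → ℝᵐ be continuously differentiable such that R_ε, ∂_tR_ε and ∂_sR_ε are bounded on every compact set uniformly in ε. If for every ε ∈ (0,1] the function Φ_ε := Φ⁰ + ε²Φ¹ + ε⁴R_ε satisfies (A⁰ + ε²A¹)·∂_tΦ_ε + (B⁰ + ε²B¹)·∂_sΦ_ε + c⁰(Φ_ε) + ε²c¹(Φ_ε) = 0 everywhere, then Φ⁰ satisfies the limit system A⁰·∂_tΦ⁰ + B⁰·∂_sΦ⁰ + c⁰(Φ⁰)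 = 0 and Φ¹ satisfies the first-order correction system A⁰·∂_tΦ¹ + B⁰·∂_sΦ¹ + (Dc⁰)(Φ⁰)·Φ¹ = −(A¹·∂_tΦ⁰ + B¹·∂_sΦ⁰ + c¹(Φ⁰)). -/
noncomputable section
open Filter Topology Set

open Filter Topology Set

lemma aux_pow_tendsto (k : ℕ) (hk : k ≠ 0) :
    Tendsto (fun ε : ℝ => ε ^ k) (𝓝[>] (0:ℝ)) (𝓝 0) := by
  have h : Tendsto (fun ε : ℝ => ε ^ k) (𝓝[>] (0:ℝ)) (𝓝 (0 ^ k)) :=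
    ((continuous_pow k).tendsto 0).mono_left nhdsWithin_le_nhds
  simpa [zero_pow hk] using h

lemma aux_tendsto_pow_smul {V : Type*} [NormedAddCommGroup V] [NormedSpace ℝ V]
    (w : ℝ → V) (M : ℝ) (k : ℕ) (hk : k ≠ 0)
    (hw : ∀ ε ∈ Set.Ioc (0:ℝ) 1, ‖w ε‖ ≤ M) :
    Tendsto (fun ε => ε ^ k • w ε) (𝓝[>] (0:ℝ)) (𝓝 0) := by
  apply squeeze_zero_norm' (a := fun ε : ℝ => ε ^ k * M)
  · filter_upwards [Ioc_mem_nhdsGT (α := ℝ) one_pos] with ε hε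
    rw [norm_smul, norm_pow, Real.norm_eq_abs, abs_of_pos hε.1]
    exact mul_le_mul_of_nonneg_left (hw ε hε) (pow_nonneg hε.1.le k)
  · simpa using (aux_pow_tendsto k hk).mul_const M

lemma aux_deriv_quotient {V W : Type*} [NormedAddCommGroup V] [NormedSpace ℝ V]
    [NormedAddCommGroup W] [NormedSpace ℝ W]
    {c : V → W} {x : V} {D : V →L[ℝ] W} (hD : HasFDerivAt c D x)
    {v : ℝ → V} {y : V} (hv : Tendsto v (𝓝[>] (0:ℝ)) (𝓝 y))
    {C : ℝ} (hvb : ∀ ε ∈ Set.Ioc (0:ℝ) 1, ‖v ε‖ ≤ C) :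
    Tendsto (fun ε : ℝ => (ε ^ 2)⁻¹ • (c (x + ε ^ 2 • v ε) - c x)) (𝓝[>] (0:ℝ))
      (𝓝 (D y)) := by
  have hC0 : 0 ≤ C := le_trans (norm_nonneg _) (hvb 1 ⟨one_pos, le_rfl⟩)
  have hh : Tendsto (fun ε : ℝ => ε ^ 2 • v ε) (𝓝[>] (0:ℝ)) (𝓝 0) :=
    aux_tendsto_pow_smul v C 2 two_ne_zero hvb
  have hrem : Tendsto
      (fun ε : ℝ => (ε ^ 2)⁻¹ • (c (x + ε ^ 2 • v ε) - c x - D (ε ^ 2 • v ε)))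
      (𝓝[>] (0:ℝ)) (𝓝 0) := by
    rw [NormedAddCommGroup.tendsto_nhds_zero]
    intro δ hδ
    have hc : 0 < δ / (2 * (C + 1)) := by positivity
    have hev : ∀ᶠ h in 𝓝 (0 : V), ‖c (x + h) - c x - D h‖ ≤ (δ / (2 * (C + 1))) * ‖h‖ :=
      (hasFDerivAt_iff_isLittleO_nhds_zero.1 hD).def hc
    filter_upwards [hh.eventually hev, Ioc_mem_nhdsGT (α := ℝ) one_pos] with ε h1 h2
    have hε2 : (0:ℝ) < ε ^ 2 := pow_pos h2.1 2
    have hnorm : ‖ε ^ 2 • v ε‖ = ε ^ 2 * ‖v ε‖ := by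
      rw [norm_smul, Real.norm_eq_abs, abs_of_pos hε2]
    have hfin : (δ / (2 * (C + 1))) * (C + 1) = δ / 2 := by field_simp
    calc ‖(ε ^ 2)⁻¹ • (c (x + ε ^ 2 • v ε) - c x - D (ε ^ 2 • v ε))‖
        = (ε ^ 2)⁻¹ * ‖c (x + ε ^ 2 • v ε) - c x - D (ε ^ 2 • v ε)‖ := by
          rw [norm_smul, Real.norm_eq_abs, abs_of_pos (inv_pos.2 hε2)]
      _ ≤ (ε ^ 2)⁻¹ * ((δ / (2 * (C + 1))) * (ε ^ 2 * ‖v ε‖)) := by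
          refine mul_le_mul_of_nonneg_left ?_ (le_of_lt (inv_pos.2 hε2))
          rw [← hnorm]; exact h1
      _ = (δ / (2 * (C + 1))) * ‖v ε‖ := by rw [mul_left_comm, inv_mul_cancel_left₀ hε2.ne']
      _ ≤ (δ / (2 * (C + 1))) * (C + 1) := by
          exact mul_le_mul_of_nonneg_left (le_trans (hvb ε h2) (by linarith)) (le_of_lt hc)
      _ = δ / 2 := hfin
      _ < δ := by linarith
  have hDv : Tendsto (fun ε : ℝ => D (v ε)) (𝓝[>] (0:ℝ)) (𝓝 (D y)) :=
    (D.continuous.tendsto y).comp hv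
  have hsum := hrem.add hDv
  rw [zero_add] at hsum
  refine hsum.congr' ?_
  filter_upwards [self_mem_nhdsWithin] with ε (hε : (0:ℝ) < ε)
  have hne : (ε : ℝ) ^ 2 ≠ 0 := pow_ne_zero _ (ne_of_gt hε)
  have hDs : (ε ^ 2)⁻¹ • D (ε ^ 2 • v ε) = D (v ε) := by
    rw [map_smul, smul_smul, inv_mul_cancel₀ hne, one_smul]
  rw [smul_sub, hDs, sub_add_cancel]


/-- Converse direction of the asymptotic expansion: if for every
`ε ∈ (0,1]` the function `Φ_ε = Φ⁰ + ε²Φ¹ + ε⁴R_ε` (with remainders `R_ε` whose values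
and partial derivatives are bounded on compact sets uniformly in `ε`) solves the
ε-dependent system exactly, then `Φ⁰` solves the limit system and `Φ¹` the
first-order correction system. -/
theorem asymptotic_expansion_coefficients_solve_systems
    (m : ℕ) (A0 A1 B0 B1 : Matrix (Fin m) (Fin m) ℝ)
    (c0 : (Fin m → ℝ) → Fin m → ℝ) (hc0 : ContDiff ℝ 1 c0)
    (c1 : (Fin m → ℝ) → Fin m → ℝ) (hc1 : Continuous c1)
    (Φ0 Φ1 : ℝ × ℝ → Fin m → ℝ) (hΦ0 : ContDiff ℝ 1 Φ0) (hΦ1 : ContDiff ℝ 1 Φ1)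
    (R : ℝ → ℝ × ℝ → Fin m → ℝ)
    (hR : ∀ ε ∈ Set.Ioc (0:ℝ) 1, ContDiff ℝ 1 (R ε))
    (hRbound : ∀ Q : Set (ℝ × ℝ), IsCompact Q → ∃ M : ℝ,
      ∀ ε ∈ Set.Ioc (0:ℝ) 1, ∀ p ∈ Q,
        ‖R ε p‖ ≤ M ∧ ‖pt (R ε) p‖ ≤ M ∧ ‖ps (R ε) p‖ ≤ M)
    (hsol : ∀ ε ∈ Set.Ioc (0:ℝ) 1, ∀ p : ℝ × ℝ,
      (A0 + ε ^ 2 • A1).mulVec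
          (pt (fun q => Φ0 q + ε ^ 2 • Φ1 q + ε ^ 4 • R ε q) p)
        + (B0 + ε ^ 2 • B1).mulVec
          (ps (fun q => Φ0 q + ε ^ 2 • Φ1 q + ε ^ 4 • R ε q) p)
        + c0 (Φ0 p + ε ^ 2 • Φ1 p + ε ^ 4 • R ε p)
        + ε ^ 2 • c1 (Φ0 p + ε ^ 2 • Φ1 p + ε ^ 4 • R ε p) = 0) :
    (∀ p : ℝ × ℝ,
      A0.mulVec (pt Φ0 p) + B0.mulVec (ps Φ0 p) + c0 (Φ0 p) = 0) ∧
    (∀ p : ℝ × ℝ,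
      A0.mulVec (pt Φ1 p) + B0.mulVec (ps Φ1 p) + (fderiv ℝ c0 (Φ0 p)) (Φ1 p)
        = -(A1.mulVec (pt Φ0 p) + B1.mulVec (ps Φ0 p) + c1 (Φ0 p))) := by
  have hΦ0d : Differentiable ℝ Φ0 := hΦ0.differentiable one_ne_zero
  have hΦ1d : Differentiable ℝ Φ1 := hΦ1.differentiable one_ne_zero
  have hIoc : Set.Ioc (0:ℝ) 1 ∈ 𝓝[>] (0:ℝ) := Ioc_mem_nhdsGT one_pos
  have hmv : ∀ A : Matrix (Fin m) (Fin m) ℝ, ∃ C : ℝ, 0 ≤ C ∧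
      ∀ v : Fin m → ℝ, ‖A.mulVec v‖ ≤ C * ‖v‖ := by
    intro A
    refine ⟨‖(LinearMap.toContinuousLinearMap A.mulVecLin : (Fin m → ℝ) →L[ℝ] (Fin m → ℝ))‖,
      norm_nonneg _, fun v => ?_⟩
    have h := (LinearMap.toContinuousLinearMap A.mulVecLin :
      (Fin m → ℝ) →L[ℝ] (Fin m → ℝ)).le_opNorm v
    simpa [LinearMap.coe_toContinuousLinearMap', Matrix.mulVecLin_apply] using h
  have hslicet : ∀ (f : ℝ × ℝ → Fin m → ℝ), Differentiable ℝ f → ∀ p : ℝ × ℝ,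
      HasDerivAt (fun t => f (p.1, t)) (pt f p) p.2 := by
    intro f hf p
    have h : DifferentiableAt ℝ (fun t => f (p.1, t)) p.2 :=
      DifferentiableAt.comp p.2 (hf (p.1, p.2))
        ((differentiableAt_const (c := p.1)).prodMk differentiableAt_id)
    exact h.hasDerivAt
  have hslices : ∀ (f : ℝ × ℝ → Fin m → ℝ), Differentiable ℝ f → ∀ p : ℝ × ℝ,
      HasDerivAt (fun s => f (s, p.2)) (ps f p) p.1 := by
    intro f hf p
    have h : DifferentiableAt ℝ (fun s => f (s, p.2)) p.1 :=
      DifferentiableAt.comp p.1 (hf (p.1, p.2))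
        (differentiableAt_id.prodMk (differentiableAt_const p.2))
    exact h.hasDerivAt
  have key : ∀ p : ℝ × ℝ,
      (A0.mulVec (pt Φ0 p) + B0.mulVec (ps Φ0 p) + c0 (Φ0 p) = 0) ∧
      (A0.mulVec (pt Φ1 p) + B0.mulVec (ps Φ1 p) + (fderiv ℝ c0 (Φ0 p)) (Φ1 p)
        = -(A1.mulVec (pt Φ0 p) + B1.mulVec (ps Φ0 p) + c1 (Φ0 p))) := by
    intro p
    obtain ⟨M, hM⟩ := hRbound {p} isCompact_singleton
    have hMp : ∀ ε ∈ Set.Ioc (0:ℝ) 1,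
        ‖R ε p‖ ≤ M ∧ ‖pt (R ε) p‖ ≤ M ∧ ‖ps (R ε) p‖ ≤ M :=
      fun ε hε => hM ε hε p (Set.mem_singleton p)
    have hM0 : 0 ≤ M := le_trans (norm_nonneg _) (hMp 1 ⟨one_pos, le_rfl⟩).1
    obtain ⟨CA0, hCA0, hCA0le⟩ := hmv A0
    obtain ⟨CA1, hCA1, hCA1le⟩ := hmv A1
    obtain ⟨CB0, hCB0, hCB0le⟩ := hmv B0
    obtain ⟨CB1, hCB1, hCB1le⟩ := hmv B1
    have heq : ∀ ε ∈ Set.Ioc (0:ℝ) 1,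
        A0.mulVec (pt Φ0 p) + B0.mulVec (ps Φ0 p)
          + c0 (Φ0 p + ε ^ 2 • Φ1 p + ε ^ 4 • R ε p)
          + ε ^ 2 • c1 (Φ0 p + ε ^ 2 • Φ1 p + ε ^ 4 • R ε p)
          + ε ^ 2 • A1.mulVec (pt Φ0 p) + ε ^ 2 • A0.mulVec (pt Φ1 p)
          + ε ^ 2 • B1.mulVec (ps Φ0 p) + ε ^ 2 • B0.mulVec (ps Φ1 p)
          + ε ^ 4 • A1.mulVec (pt Φ1 p) + ε ^ 4 • A0.mulVec (pt (R ε) p)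
          + ε ^ 4 • B1.mulVec (ps Φ1 p) + ε ^ 4 • B0.mulVec (ps (R ε) p)
          + ε ^ 6 • A1.mulVec (pt (R ε) p) + ε ^ 6 • B1.mulVec (ps (R ε) p) = 0 := by
      intro ε hε
      have hRd : Differentiable ℝ (R ε) := (hR ε hε).differentiable one_ne_zero
      have hptE : pt (fun q => Φ0 q + ε ^ 2 • Φ1 q + ε ^ 4 • R ε q) p
          = pt Φ0 p + ε ^ 2 • pt Φ1 p + ε ^ 4 • pt (R ε) p :=
        (((hslicet Φ0 hΦ0d p).add ((hslicet Φ1 hΦ1d p).const_smul (ε ^ 2))).add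
          ((hslicet (R ε) hRd p).const_smul (ε ^ 4))).deriv
      have hpsE : ps (fun q => Φ0 q + ε ^ 2 • Φ1 q + ε ^ 4 • R ε q) p
          = ps Φ0 p + ε ^ 2 • ps Φ1 p + ε ^ 4 • ps (R ε) p :=
        (((hslices Φ0 hΦ0d p).add ((hslices Φ1 hΦ1d p).const_smul (ε ^ 2))).add
          ((hslices (R ε) hRd p).const_smul (ε ^ 4))).deriv
      have h := hsol ε hε p
      rw [hptE, hpsE] at h
      rw [← h]
      simp only [Matrix.add_mulVec, Matrix.mulVec_add, Matrix.mulVec_smul,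
        Matrix.smul_mulVec, smul_add, smul_smul]
      module
    -- limits for step 1
    have hupt : Tendsto (fun ε : ℝ => Φ0 p + ε ^ 2 • Φ1 p + ε ^ 4 • R ε p)
        (𝓝[>] (0:ℝ)) (𝓝 (Φ0 p)) := by
      have h1 : Tendsto (fun ε : ℝ => ε ^ 2 • Φ1 p) (𝓝[>] (0:ℝ)) (𝓝 0) :=
        aux_tendsto_pow_smul _ ‖Φ1 p‖ 2 two_ne_zero (fun ε _ => le_rfl)
      have h2 : Tendsto (fun ε : ℝ => ε ^ 4 • R ε p) (𝓝[>] (0:ℝ)) (𝓝 0) :=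
        aux_tendsto_pow_smul _ M 4 (by norm_num) (fun ε hε => (hMp ε hε).1)
      have h3 := (tendsto_const_nhds (α := ℝ) (x := Φ0 p) (f := 𝓝[>] (0:ℝ))).add h1 |>.add h2
      simpa using h3
    have hc0c : Tendsto (fun ε : ℝ => c0 (Φ0 p + ε ^ 2 • Φ1 p + ε ^ 4 • R ε p))
        (𝓝[>] (0:ℝ)) (𝓝 (c0 (Φ0 p))) := (hc0.continuous.tendsto (Φ0 p)).comp hupt
    have hc1c : Tendsto (fun ε : ℝ => c1 (Φ0 p + ε ^ 2 • Φ1 p + ε ^ 4 • R ε p))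
        (𝓝[>] (0:ℝ)) (𝓝 (c1 (Φ0 p))) := (hc1.tendsto (Φ0 p)).comp hupt
    have hpow2 : Tendsto (fun ε : ℝ => ε ^ 2) (𝓝[>] (0:ℝ)) (𝓝 0) :=
      aux_pow_tendsto 2 two_ne_zero
    have tconst : ∀ (k : ℕ), k ≠ 0 → ∀ w : Fin m → ℝ,
        Tendsto (fun ε : ℝ => ε ^ k • w) (𝓝[>] (0:ℝ)) (𝓝 0) := by
      intro k hk w
      simpa using (aux_pow_tendsto k hk).smul_const w
    have tB : ∀ (k : ℕ), k ≠ 0 → ∀ (A : Matrix (Fin m) (Fin m) ℝ) (CA : ℝ), 0 ≤ CA →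
        (∀ v, ‖A.mulVec v‖ ≤ CA * ‖v‖) → ∀ (w : ℝ → Fin m → ℝ),
        (∀ ε ∈ Set.Ioc (0:ℝ) 1, ‖w ε‖ ≤ M) →
        Tendsto (fun ε : ℝ => ε ^ k • A.mulVec (w ε)) (𝓝[>] (0:ℝ)) (𝓝 0) := by
      intro k hk A CA hCA hA w hw
      refine aux_tendsto_pow_smul _ (CA * M) k hk fun ε hε => (hA _).trans ?_
      exact mul_le_mul_of_nonneg_left (hw ε hε) hCA
    have t4 : Tendsto (fun ε : ℝ => ε ^ 2 • c1 (Φ0 p + ε ^ 2 • Φ1 p + ε ^ 4 • R ε p))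
        (𝓝[>] (0:ℝ)) (𝓝 0) := by
      simpa using hpow2.smul hc1c
    have T1 : Tendsto (fun ε : ℝ =>
        A0.mulVec (pt Φ0 p) + B0.mulVec (ps Φ0 p)
          + c0 (Φ0 p + ε ^ 2 • Φ1 p + ε ^ 4 • R ε p)
          + ε ^ 2 • c1 (Φ0 p + ε ^ 2 • Φ1 p + ε ^ 4 • R ε p)
          + ε ^ 2 • A1.mulVec (pt Φ0 p) + ε ^ 2 • A0.mulVec (pt Φ1 p)
          + ε ^ 2 • B1.mulVec (ps Φ0 p) + ε ^ 2 • B0.mulVec (ps Φ1 p)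
          + ε ^ 4 • A1.mulVec (pt Φ1 p) + ε ^ 4 • A0.mulVec (pt (R ε) p)
          + ε ^ 4 • B1.mulVec (ps Φ1 p) + ε ^ 4 • B0.mulVec (ps (R ε) p)
          + ε ^ 6 • A1.mulVec (pt (R ε) p) + ε ^ 6 • B1.mulVec (ps (R ε) p))
        (𝓝[>] (0:ℝ))
        (𝓝 (A0.mulVec (pt Φ0 p) + B0.mulVec (ps Φ0 p) + c0 (Φ0 p) + 0
          + 0 + 0 + 0 + 0 + 0 + 0 + 0 + 0 + 0 + 0)) := by
      exact ((((((((((((tendsto_const_nhds.add tendsto_const_nhds).add hc0c).add t4).add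
        (tconst 2 two_ne_zero _)).add (tconst 2 two_ne_zero _)).add
        (tconst 2 two_ne_zero _)).add (tconst 2 two_ne_zero _)).add
        (tconst 4 (by norm_num) _)).add
        (tB 4 (by norm_num) A0 CA0 hCA0 hCA0le _ (fun ε hε => (hMp ε hε).2.1))).add
        (tconst 4 (by norm_num) _)).add
        (tB 4 (by norm_num) B0 CB0 hCB0 hCB0le _ (fun ε hε => (hMp ε hε).2.2))).add
        (tB 6 (by norm_num) A1 CA1 hCA1 hCA1le _ (fun ε hε => (hMp ε hε).2.1))).add
        (tB 6 (by norm_num) B1 CB1 hCB1 hCB1le _ (fun ε hε => (hMp ε hε).2.2))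
    have hz1 : Tendsto (fun ε : ℝ =>
        A0.mulVec (pt Φ0 p) + B0.mulVec (ps Φ0 p)
          + c0 (Φ0 p + ε ^ 2 • Φ1 p + ε ^ 4 • R ε p)
          + ε ^ 2 • c1 (Φ0 p + ε ^ 2 • Φ1 p + ε ^ 4 • R ε p)
          + ε ^ 2 • A1.mulVec (pt Φ0 p) + ε ^ 2 • A0.mulVec (pt Φ1 p)
          + ε ^ 2 • B1.mulVec (ps Φ0 p) + ε ^ 2 • B0.mulVec (ps Φ1 p)
          + ε ^ 4 • A1.mulVec (pt Φ1 p) + ε ^ 4 • A0.mulVec (pt (R ε) p)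
          + ε ^ 4 • B1.mulVec (ps Φ1 p) + ε ^ 4 • B0.mulVec (ps (R ε) p)
          + ε ^ 6 • A1.mulVec (pt (R ε) p) + ε ^ 6 • B1.mulVec (ps (R ε) p))
        (𝓝[>] (0:ℝ)) (𝓝 0) := by
      refine Tendsto.congr' ?_ (tendsto_const_nhds (x := (0 : Fin m → ℝ)))
      filter_upwards [hIoc] with ε hε
      exact (heq ε hε).symm
    have hgoal1 : A0.mulVec (pt Φ0 p) + B0.mulVec (ps Φ0 p) + c0 (Φ0 p) = 0 := by
      have hlim := tendsto_nhds_unique T1 hz1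
      simpa using hlim
    refine ⟨hgoal1, ?_⟩
    -- step 2
    have hmid : ∀ ε ∈ Set.Ioc (0:ℝ) 1,
        (c0 (Φ0 p + ε ^ 2 • Φ1 p + ε ^ 4 • R ε p) - c0 (Φ0 p))
          + ε ^ 2 • c1 (Φ0 p + ε ^ 2 • Φ1 p + ε ^ 4 • R ε p)
          + ε ^ 2 • A1.mulVec (pt Φ0 p) + ε ^ 2 • A0.mulVec (pt Φ1 p)
          + ε ^ 2 • B1.mulVec (ps Φ0 p) + ε ^ 2 • B0.mulVec (ps Φ1 p)
          + ε ^ 4 • A1.mulVec (pt Φ1 p) + ε ^ 4 • A0.mulVec (pt (R ε) p)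
          + ε ^ 4 • B1.mulVec (ps Φ1 p) + ε ^ 4 • B0.mulVec (ps (R ε) p)
          + ε ^ 6 • A1.mulVec (pt (R ε) p) + ε ^ 6 • B1.mulVec (ps (R ε) p) = 0 := by
      intro ε hε
      have h2 : (c0 (Φ0 p + ε ^ 2 • Φ1 p + ε ^ 4 • R ε p) - c0 (Φ0 p))
          + ε ^ 2 • c1 (Φ0 p + ε ^ 2 • Φ1 p + ε ^ 4 • R ε p)
          + ε ^ 2 • A1.mulVec (pt Φ0 p) + ε ^ 2 • A0.mulVec (pt Φ1 p)
          + ε ^ 2 • B1.mulVec (ps Φ0 p) + ε ^ 2 • B0.mulVec (ps Φ1 p)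
          + ε ^ 4 • A1.mulVec (pt Φ1 p) + ε ^ 4 • A0.mulVec (pt (R ε) p)
          + ε ^ 4 • B1.mulVec (ps Φ1 p) + ε ^ 4 • B0.mulVec (ps (R ε) p)
          + ε ^ 6 • A1.mulVec (pt (R ε) p) + ε ^ 6 • B1.mulVec (ps (R ε) p)
          = (A0.mulVec (pt Φ0 p) + B0.mulVec (ps Φ0 p)
            + c0 (Φ0 p + ε ^ 2 • Φ1 p + ε ^ 4 • R ε p)
            + ε ^ 2 • c1 (Φ0 p + ε ^ 2 • Φ1 p + ε ^ 4 • R ε p)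
            + ε ^ 2 • A1.mulVec (pt Φ0 p) + ε ^ 2 • A0.mulVec (pt Φ1 p)
            + ε ^ 2 • B1.mulVec (ps Φ0 p) + ε ^ 2 • B0.mulVec (ps Φ1 p)
            + ε ^ 4 • A1.mulVec (pt Φ1 p) + ε ^ 4 • A0.mulVec (pt (R ε) p)
            + ε ^ 4 • B1.mulVec (ps Φ1 p) + ε ^ 4 • B0.mulVec (ps (R ε) p)
            + ε ^ 6 • A1.mulVec (pt (R ε) p) + ε ^ 6 • B1.mulVec (ps (R ε) p))
            - (A0.mulVec (pt Φ0 p) + B0.mulVec (ps Φ0 p) + c0 (Φ0 p)) := by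
        module
      rw [h2, heq ε hε, hgoal1, sub_zero]
    have heq2 : ∀ ε ∈ Set.Ioc (0:ℝ) 1,
        (ε ^ 2)⁻¹ • (c0 (Φ0 p + ε ^ 2 • Φ1 p + ε ^ 4 • R ε p) - c0 (Φ0 p))
          + c1 (Φ0 p + ε ^ 2 • Φ1 p + ε ^ 4 • R ε p)
          + A1.mulVec (pt Φ0 p) + A0.mulVec (pt Φ1 p)
          + B1.mulVec (ps Φ0 p) + B0.mulVec (ps Φ1 p)
          + ε ^ 2 • A1.mulVec (pt Φ1 p) + ε ^ 2 • A0.mulVec (pt (R ε) p)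
          + ε ^ 2 • B1.mulVec (ps Φ1 p) + ε ^ 2 • B0.mulVec (ps (R ε) p)
          + ε ^ 4 • A1.mulVec (pt (R ε) p) + ε ^ 4 • B1.mulVec (ps (R ε) p) = 0 := by
      intro ε hε
      have hne : (ε : ℝ) ^ 2 ≠ 0 := pow_ne_zero _ (ne_of_gt hε.1)
      have k4 : (ε ^ 2)⁻¹ * ε ^ 4 = ε ^ 2 := by field_simp
      have k6 : (ε ^ 2)⁻¹ * ε ^ 6 = ε ^ 4 := by field_simp
      have h := congrArg (fun y => (ε ^ 2)⁻¹ • y) (hmid ε hε)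
      simp only [smul_add, smul_smul, smul_zero] at h
      rw [inv_mul_cancel₀ hne, k4, k6] at h
      simpa only [one_smul] using h
    have hvt : Tendsto (fun ε : ℝ => Φ1 p + ε ^ 2 • R ε p) (𝓝[>] (0:ℝ)) (𝓝 (Φ1 p)) := by
      have h2 := (tendsto_const_nhds (α := ℝ) (x := Φ1 p) (f := 𝓝[>] (0:ℝ))).add
        (aux_tendsto_pow_smul (fun ε => R ε p) M 2 two_ne_zero (fun ε hε => (hMp ε hε).1))
      simpa using h2
    have hvb : ∀ ε ∈ Set.Ioc (0:ℝ) 1, ‖Φ1 p + ε ^ 2 • R ε p‖ ≤ ‖Φ1 p‖ + M := by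
      intro ε hε
      refine (norm_add_le _ _).trans ?_
      have h1 : ‖ε ^ 2 • R ε p‖ = ε ^ 2 * ‖R ε p‖ := by
        rw [norm_smul, norm_pow, Real.norm_eq_abs, abs_of_pos hε.1]
      have he1 : ε ^ 2 ≤ 1 := pow_le_one₀ hε.1.le hε.2
      have h3 : ε ^ 2 * ‖R ε p‖ ≤ 1 * M :=
        mul_le_mul he1 (hMp ε hε).1 (norm_nonneg _) one_pos.le
      rw [h1]; linarith
    have hquot0 : Tendsto (fun ε : ℝ =>
        (ε ^ 2)⁻¹ • (c0 (Φ0 p + ε ^ 2 • (Φ1 p + ε ^ 2 • R ε p)) - c0 (Φ0 p)))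
        (𝓝[>] (0:ℝ)) (𝓝 (fderiv ℝ c0 (Φ0 p) (Φ1 p))) :=
      aux_deriv_quotient ((hc0.differentiable one_ne_zero (Φ0 p)).hasFDerivAt) hvt hvb
    have hargeq : ∀ ε : ℝ, Φ0 p + ε ^ 2 • Φ1 p + ε ^ 4 • R ε p
        = Φ0 p + ε ^ 2 • (Φ1 p + ε ^ 2 • R ε p) := by
      intro ε; module
    have hquot : Tendsto (fun ε : ℝ =>
        (ε ^ 2)⁻¹ • (c0 (Φ0 p + ε ^ 2 • Φ1 p + ε ^ 4 • R ε p) - c0 (Φ0 p)))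
        (𝓝[>] (0:ℝ)) (𝓝 (fderiv ℝ c0 (Φ0 p) (Φ1 p))) := by
      refine hquot0.congr fun ε => ?_
      rw [hargeq ε]
    have T2 : Tendsto (fun ε : ℝ =>
        (ε ^ 2)⁻¹ • (c0 (Φ0 p + ε ^ 2 • Φ1 p + ε ^ 4 • R ε p) - c0 (Φ0 p))
          + c1 (Φ0 p + ε ^ 2 • Φ1 p + ε ^ 4 • R ε p)
          + A1.mulVec (pt Φ0 p) + A0.mulVec (pt Φ1 p)
          + B1.mulVec (ps Φ0 p) + B0.mulVec (ps Φ1 p)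
          + ε ^ 2 • A1.mulVec (pt Φ1 p) + ε ^ 2 • A0.mulVec (pt (R ε) p)
          + ε ^ 2 • B1.mulVec (ps Φ1 p) + ε ^ 2 • B0.mulVec (ps (R ε) p)
          + ε ^ 4 • A1.mulVec (pt (R ε) p) + ε ^ 4 • B1.mulVec (ps (R ε) p))
        (𝓝[>] (0:ℝ))
        (𝓝 (fderiv ℝ c0 (Φ0 p) (Φ1 p) + c1 (Φ0 p)
          + A1.mulVec (pt Φ0 p) + A0.mulVec (pt Φ1 p)
          + B1.mulVec (ps Φ0 p) + B0.mulVec (ps Φ1 p)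
          + 0 + 0 + 0 + 0 + 0 + 0)) := by
      exact ((((((((((hquot.add hc1c).add tendsto_const_nhds).add tendsto_const_nhds).add
        tendsto_const_nhds).add tendsto_const_nhds).add
        (tconst 2 two_ne_zero _)).add
        (tB 2 two_ne_zero A0 CA0 hCA0 hCA0le _ (fun ε hε => (hMp ε hε).2.1))).add
        (tconst 2 two_ne_zero _)).add
        (tB 2 two_ne_zero B0 CB0 hCB0 hCB0le _ (fun ε hε => (hMp ε hε).2.2))).add
        (tB 4 (by norm_num) A1 CA1 hCA1 hCA1le _ (fun ε hε => (hMp ε hε).2.1))).add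
        (tB 4 (by norm_num) B1 CB1 hCB1 hCB1le _ (fun ε hε => (hMp ε hε).2.2))
    have hz2 : Tendsto (fun ε : ℝ =>
        (ε ^ 2)⁻¹ • (c0 (Φ0 p + ε ^ 2 • Φ1 p + ε ^ 4 • R ε p) - c0 (Φ0 p))
          + c1 (Φ0 p + ε ^ 2 • Φ1 p + ε ^ 4 • R ε p)
          + A1.mulVec (pt Φ0 p) + A0.mulVec (pt Φ1 p)
          + B1.mulVec (ps Φ0 p) + B0.mulVec (ps Φ1 p)
          + ε ^ 2 • A1.mulVec (pt Φ1 p) + ε ^ 2 • A0.mulVec (pt (R ε) p)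
          + ε ^ 2 • B1.mulVec (ps Φ1 p) + ε ^ 2 • B0.mulVec (ps (R ε) p)
          + ε ^ 4 • A1.mulVec (pt (R ε) p) + ε ^ 4 • B1.mulVec (ps (R ε) p))
        (𝓝[>] (0:ℝ)) (𝓝 0) := by
      refine Tendsto.congr' ?_ (tendsto_const_nhds (x := (0 : Fin m → ℝ)))
      filter_upwards [hIoc] with ε hε
      exact (heq2 ε hε).symm
    have hsum0 : fderiv ℝ c0 (Φ0 p) (Φ1 p) + c1 (Φ0 p)
        + A1.mulVec (pt Φ0 p) + A0.mulVec (pt Φ1 p)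
        + B1.mulVec (ps Φ0 p) + B0.mulVec (ps Φ1 p) = 0 := by
      have hlim := tendsto_nhds_unique T2 hz2
      simpa using hlim
    have h2' : (A0.mulVec (pt Φ1 p) + B0.mulVec (ps Φ1 p) + (fderiv ℝ c0 (Φ0 p)) (Φ1 p))
        + (A1.mulVec (pt Φ0 p) + B1.mulVec (ps Φ0 p) + c1 (Φ0 p)) = 0 := by
      rw [← hsum0]; abel
    exact eq_neg_of_add_eq_zero_left h2'
  exact ⟨fun p => (key p).1, fun p => (key p).2⟩
end
end

section
/- Let r̆ : ℝ² → ℝ³ be twice continuously differentiable in (s,t), let D : ℝ² → Matrix (Fin 3) (Fin 3) ℝ be continuously differentiable, and let ω, κ : ℝ² → ℝ³ be continuous, such that ∂_tD = −[ω]_× · D and ∂_sD = −[κ]_× · D hold everywhere, where [a]_× denotes the 3×3 matrix with [a]_× x = a × x (cross product in ℝ³). Define v := D·∂_t r̆ and τ := D·∂_s r̆. Then the compatibility condition ∂_t τ = ∂_s v + κ × v − ω × τ holds everywhere. -/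
noncomputable section

/-- Cross product on `ℝ³`. -/
def cross3 (a b : Fin 3 → ℝ) : Fin 3 → ℝ :=
  ![a 1 * b 2 - a 2 * b 1, a 2 * b 0 - a 0 * b 2, a 0 * b 1 - a 1 * b 0]

/-- The cross-product matrix `[a]_×` with `[a]_× x = a × x`. -/
def crossMat (a : Fin 3 → ℝ) : Matrix (Fin 3) (Fin 3) ℝ :=
  !![0, -a 2, a 1; a 2, 0, -a 0; -a 1, a 0, 0]

/-- Entrywise `t`-partial derivative of a matrix-valued field. -/
def ptM (D : ℝ × ℝ → Matrix (Fin 3) (Fin 3) ℝ) (p : ℝ × ℝ) : Matrix (Fin 3) (Fin 3) ℝ :=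
  Matrix.of fun i j => deriv (fun t => D (p.1, t) i j) p.2

/-- Entrywise `s`-partial derivative of a matrix-valued field. -/
def psM (D : ℝ × ℝ → Matrix (Fin 3) (Fin 3) ℝ) (p : ℝ × ℝ) : Matrix (Fin 3) (Fin 3) ℝ :=
  Matrix.of fun i j => deriv (fun s => D (s, p.2) i j) p.1

/- Auxiliary lemmas -/

lemma cross3_eq_mulVec (a x : Fin 3 → ℝ) : cross3 a x = (crossMat a).mulVec x := by
  funext i
  fin_cases i <;>
    simp [cross3, crossMat, Matrix.mulVec, dotProduct, Fin.sum_univ_three,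
      Matrix.vecHead, Matrix.vecTail] <;> ring

lemma lineT_hasDerivAt (p : ℝ × ℝ) :
    HasDerivAt (fun t : ℝ => ((p.1, t) : ℝ × ℝ)) ((0 : ℝ), (1 : ℝ)) p.2 :=
  (hasDerivAt_const _ _).prodMk (hasDerivAt_id _)

lemma lineS_hasDerivAt (p : ℝ × ℝ) :
    HasDerivAt (fun s : ℝ => ((s, p.2) : ℝ × ℝ)) ((1 : ℝ), (0 : ℝ)) p.1 :=
  (hasDerivAt_id _).prodMk (hasDerivAt_const _ _)

lemma hasDerivAt_lineT {E : Type*} [NormedAddCommGroup E] [NormedSpace ℝ E]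
    (g : ℝ × ℝ → E) (p : ℝ × ℝ) (hg : DifferentiableAt ℝ g p) :
    HasDerivAt (fun t => g (p.1, t)) (fderiv ℝ g p (0, 1)) p.2 :=
  hg.hasFDerivAt.comp_hasDerivAt p.2 (lineT_hasDerivAt p)

lemma hasDerivAt_lineS {E : Type*} [NormedAddCommGroup E] [NormedSpace ℝ E]
    (g : ℝ × ℝ → E) (p : ℝ × ℝ) (hg : DifferentiableAt ℝ g p) :
    HasDerivAt (fun s => g (s, p.2)) (fderiv ℝ g p (1, 0)) p.1 :=
  hg.hasFDerivAt.comp_hasDerivAt p.1 (lineS_hasDerivAt p)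

/-- The first compatibility condition of the Cosserat rod theory:
if `∂_tD = −[ω]_×·D` and `∂_sD = −[κ]_×·D`, then `v := D·∂_t r̆` and `τ := D·∂_s r̆`
satisfy `∂_tτ = ∂_s v + κ × v − ω × τ`. -/
theorem compatibility_condition_curve
    (r : ℝ × ℝ → Fin 3 → ℝ) (hr : ContDiff ℝ 2 r)
    (D : ℝ × ℝ → Matrix (Fin 3) (Fin 3) ℝ)
    (hD : ∀ i j : Fin 3, ContDiff ℝ 1 (fun p : ℝ × ℝ => D p i j))
    (ω κ : ℝ × ℝ → Fin 3 → ℝ) (hω : Continuous ω) (hκ : Continuous κ)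
    (hDt : ∀ p : ℝ × ℝ, ptM D p = -(crossMat (ω p)) * D p)
    (hDs : ∀ p : ℝ × ℝ, psM D p = -(crossMat (κ p)) * D p) :
    ∀ p : ℝ × ℝ,
      pt (fun q => (D q).mulVec (ps r q)) p
        = ps (fun q => (D q).mulVec (pt r q)) p
          + cross3 (κ p) ((D p).mulVec (pt r p))
          - cross3 (ω p) ((D p).mulVec (ps r p)) := by
  intro p
  have hrd : Differentiable ℝ r := hr.differentiable two_ne_zero
  set F : ℝ × ℝ → (ℝ × ℝ) →L[ℝ] (Fin 3 → ℝ) := fderiv ℝ r with hFdef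
  have hF : ContDiff ℝ 1 F := hr.fderiv_right (by norm_num)
  have hFd : Differentiable ℝ F := hF.differentiable one_ne_zero
  have hps : ∀ q : ℝ × ℝ, ps r q = F q (1, 0) := fun q =>
    (hasDerivAt_lineS r q (hrd q)).deriv
  have hpt : ∀ q : ℝ × ℝ, pt r q = F q (0, 1) := fun q =>
    (hasDerivAt_lineT r q (hrd q)).deriv
  -- second derivative symmetry
  have hsymm : fderiv ℝ F p (0, 1) (1, 0) = fderiv ℝ F p (1, 0) (0, 1) :=
    second_derivative_symmetric (f := r) (fun y => (hrd y).hasFDerivAt)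
      (hFd p).hasFDerivAt (0, 1) (1, 0)
  set a : Fin 3 → ℝ := F p (1, 0) with ha
  set b : Fin 3 → ℝ := F p (0, 1) with hb
  set m : Fin 3 → ℝ := fderiv ℝ F p (0, 1) (1, 0) with hm
  -- t-derivative of q ↦ F q v along the t-line
  have hGt : ∀ v : ℝ × ℝ, HasDerivAt (fun t => F (p.1, t) v)
      (fderiv ℝ F p (0, 1) v) p.2 := by
    intro v
    have hc : HasFDerivAt (fun q => F q v) ((fderiv ℝ F p).flip v) p := by
      simpa using (hFd p).hasFDerivAt.clm_apply (hasFDerivAt_const v p)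
    simpa [Function.comp_def] using hc.comp_hasDerivAt p.2 (lineT_hasDerivAt p)
  have hGs : ∀ v : ℝ × ℝ, HasDerivAt (fun s => F (s, p.2) v)
      (fderiv ℝ F p (1, 0) v) p.1 := by
    intro v
    have hc : HasFDerivAt (fun q => F q v) ((fderiv ℝ F p).flip v) p := by
      simpa using (hFd p).hasFDerivAt.clm_apply (hasFDerivAt_const v p)
    simpa [Function.comp_def] using hc.comp_hasDerivAt p.1 (lineS_hasDerivAt p)
  -- derivatives of matrix entries
  have hDt' : ∀ i j : Fin 3, HasDerivAt (fun t => D (p.1, t) i j) (ptM D p i j) p.2 := by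
    intro i j
    have hdiff : DifferentiableAt ℝ (fun q : ℝ × ℝ => D q i j) p :=
      ((hD i j).differentiable one_ne_zero) p
    have h := hasDerivAt_lineT (fun q => D q i j) p hdiff
    have e : ptM D p i j = fderiv ℝ (fun q : ℝ × ℝ => D q i j) p (0, 1) := h.deriv
    rw [e]; exact h
  have hDs' : ∀ i j : Fin 3, HasDerivAt (fun s => D (s, p.2) i j) (psM D p i j) p.1 := by
    intro i j
    have hdiff : DifferentiableAt ℝ (fun q : ℝ × ℝ => D q i j) p :=
      ((hD i j).differentiable one_ne_zero) p
    have h := hasDerivAt_lineS (fun q => D q i j) p hdiff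
    have e : psM D p i j = fderiv ℝ (fun q : ℝ × ℝ => D q i j) p (1, 0) := h.deriv
    rw [e]; exact h
  -- the two main derivative computations
  have hL : pt (fun q => (D q).mulVec (ps r q)) p
      = (ptM D p).mulVec a + (D p).mulVec m := by
    have hH : HasDerivAt (fun t => (D (p.1, t)).mulVec (ps r (p.1, t)))
        ((ptM D p).mulVec a + (D p).mulVec m) p.2 := by
      rw [show (fun t => (D (p.1, t)).mulVec (ps r (p.1, t)))
          = fun t => (D (p.1, t)).mulVec (F (p.1, t) (1, 0)) by
        funext t; rw [hps (p.1, t)]]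
      apply hasDerivAt_pi.2
      intro i
      have hsum := HasDerivAt.sum (u := Finset.univ)
        (fun j _ => (hDt' i j).mul (hasDerivAt_pi.1 (hGt (1, 0)) j))
      convert hsum using 2 <;>
      simp [Matrix.mulVec, dotProduct, Finset.sum_add_distrib, ha, hm]
    exact hH.deriv
  have hS : ps (fun q => (D q).mulVec (pt r q)) p
      = (psM D p).mulVec b + (D p).mulVec m := by
    have hH : HasDerivAt (fun s => (D (s, p.2)).mulVec (pt r (s, p.2)))
        ((psM D p).mulVec b + (D p).mulVec m) p.1 := by
      rw [show (fun s => (D (s, p.2)).mulVec (pt r (s, p.2)))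
          = fun s => (D (s, p.2)).mulVec (F (s, p.2) (0, 1)) by
        funext s; rw [hpt (s, p.2)]]
      apply hasDerivAt_pi.2
      intro i
      have hsum := HasDerivAt.sum (u := Finset.univ)
        (fun j _ => (hDs' i j).mul (hasDerivAt_pi.1 (hGs (0, 1)) j))
      have hmm : m = ((fderiv ℝ F p) (1, 0)) (0, 1) := hsymm
      rw [hmm]
      convert hsum using 2 <;>
      simp [Matrix.mulVec, dotProduct, Finset.sum_add_distrib, hb]
    exact hH.deriv
  rw [hL, hS, hps p, hpt p, ← ha, ← hb, cross3_eq_mulVec, cross3_eq_mulVec, hDt p, hDs p]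
  simp only [Matrix.neg_mul, Matrix.neg_mulVec, ← Matrix.mulVec_mulVec]
  abel
end
end

section
/- Let μ > 0, a > 0, and set P = diag(1, 1, 2/a) (3×3 real matrix). Let r̆, v, ω, n, κ : ℝ² → ℝ³ be continuously differentiable in (s,t), let τ̊ : ℝ → ℝ³, let D : ℝ² → Matrix (Fin 3) (Fin 3) ℝ with D(s,t)·D(s,t)ᵀ = 1 for all (s,t), and let V : ℝ³ → ℝ be continuously differentiable. Suppose the Kirchhoff limit system holds everywhere: D·∂_t r̆ = v; 0 = ∂_s v + κ × v + τ̊ × ω; ∂_tκ = ∂_sω + κ × ω; ∂_t v = ∂_s n + κ × n + v × ω + D·(−∇V(r̆)); and 0 = ∂_s m + κ × m + τ̊ × n, where m := μ⁻²P·κ. Then the energy density w⁰ := ½‖v‖² + (2μ²)⁻¹ κ·(P·κ) + V(r̆) satisfies the local energy balance ∂_t w⁰ = ∂_s (v·n + ω·m) everywhere. -/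
open Matrix

noncomputable section

/-- Coordinate gradient of a scalar function on `ℝ³`. -/
def grad3 (V : (Fin 3 → ℝ) → ℝ) (x : Fin 3 → ℝ) : Fin 3 → ℝ :=
  fun i => fderiv ℝ V x (Pi.single i 1)

/-! ### Auxiliary lemmas -/

lemma hasDerivAt_pt {E : Type*} [NormedAddCommGroup E] [NormedSpace ℝ E]
    {f : ℝ × ℝ → E} (hf : Differentiable ℝ f) (p : ℝ × ℝ) :
    HasDerivAt (fun τ => f (p.1, τ)) (pt f p) p.2 := by
  have h : DifferentiableAt ℝ (fun τ => f (p.1, τ)) p.2 :=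
    (hf (p.1, p.2)).comp p.2 ((differentiableAt_const _).prodMk differentiableAt_id)
  exact h.hasDerivAt

lemma hasDerivAt_ps {E : Type*} [NormedAddCommGroup E] [NormedSpace ℝ E]
    {f : ℝ × ℝ → E} (hf : Differentiable ℝ f) (p : ℝ × ℝ) :
    HasDerivAt (fun σ => f (σ, p.2)) (ps f p) p.1 := by
  have h : DifferentiableAt ℝ (fun σ => f (σ, p.2)) p.1 :=
    (hf (p.1, p.2)).comp p.1 (differentiableAt_id.prodMk (differentiableAt_const _))
  exact h.hasDerivAt

lemma HasDerivAt.dotp {f g : ℝ → Fin 3 → ℝ} {f' g' : Fin 3 → ℝ} {x : ℝ}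
    (hf : HasDerivAt f f' x) (hg : HasDerivAt g g' x) :
    HasDerivAt (fun t => f t ⬝ᵥ g t) (f' ⬝ᵥ g x + f x ⬝ᵥ g') x := by
  simp only [dotProduct]
  rw [← Finset.sum_add_distrib]
  exact HasDerivAt.fun_sum fun i _ => (hasDerivAt_pi.mp hf i).mul (hasDerivAt_pi.mp hg i)

lemma HasDerivAt.matMulVec {A : Matrix (Fin 3) (Fin 3) ℝ}
    {f : ℝ → Fin 3 → ℝ} {f' : Fin 3 → ℝ} {x : ℝ} (hf : HasDerivAt f f' x) :
    HasDerivAt (fun t => A.mulVec (f t)) (A.mulVec f') x := by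
  apply hasDerivAt_pi.mpr
  intro i
  simp only [Matrix.mulVec, dotProduct]
  exact HasDerivAt.fun_sum fun j _ => (hasDerivAt_pi.mp hf j).const_mul (A i j)

lemma hasDerivAt_compV {V : (Fin 3 → ℝ) → ℝ} (hV : ContDiff ℝ 1 V)
    {γ : ℝ → Fin 3 → ℝ} {γ' : Fin 3 → ℝ} {x : ℝ} (hγ : HasDerivAt γ γ' x) :
    HasDerivAt (fun t => V (γ t)) (grad3 V (γ x) ⬝ᵥ γ') x := by
  have h1 : HasFDerivAt V (fderiv ℝ V (γ x)) (γ x) :=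
    (hV.differentiable one_ne_zero (γ x)).hasFDerivAt
  have h2 := h1.comp_hasDerivAt x hγ
  refine h2.congr_deriv (Eq.symm ?_)
  have hrep : γ' = ∑ i : Fin 3, γ' i • (Pi.single i 1 : Fin 3 → ℝ) := by
    funext j
    simp [Pi.single_apply, Finset.sum_apply]
  conv_rhs => rw [hrep]
  rw [map_sum]
  simp only [ContinuousLinearMap.map_smul, smul_eq_mul]
  simp [grad3, dotProduct, mul_comm]

/-- local energy balance for the Kirchhoff limit system:
`∂_t w⁰ = ∂_s (v·n + ω·m)` with `w⁰ = ½‖v‖² + (2μ²)⁻¹κ·(P·κ) + V(r̆)` and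
`m = μ⁻²P·κ`, `P = diag(1,1,2/a)`. -/
theorem kirchhoff_local_energy_balance
    (μ a : ℝ) (hμ : 0 < μ) (ha : 0 < a)
    (r v ω n κ : ℝ × ℝ → Fin 3 → ℝ)
    (hr : ContDiff ℝ 1 r) (hv : ContDiff ℝ 1 v) (hω : ContDiff ℝ 1 ω)
    (hn : ContDiff ℝ 1 n) (hκ : ContDiff ℝ 1 κ)
    (τ0 : ℝ → Fin 3 → ℝ)
    (D : ℝ × ℝ → Matrix (Fin 3) (Fin 3) ℝ)
    (hD : ∀ p : ℝ × ℝ, D p * (D p)ᵀ = 1)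
    (V : (Fin 3 → ℝ) → ℝ) (hV : ContDiff ℝ 1 V)
    (hkin : ∀ p : ℝ × ℝ, (D p).mulVec (pt r p) = v p)
    (hconstr : ∀ p : ℝ × ℝ,
      (0 : Fin 3 → ℝ) = ps v p + cross3 (κ p) (v p) + cross3 (τ0 p.1) (ω p))
    (hcompat : ∀ p : ℝ × ℝ, pt κ p = ps ω p + cross3 (κ p) (ω p))
    (hlin : ∀ p : ℝ × ℝ,
      pt v p = ps n p + cross3 (κ p) (n p) + cross3 (v p) (ω p)
        + (D p).mulVec (-(grad3 V (r p))))
    (hang : ∀ p : ℝ × ℝ,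
      (0 : Fin 3 → ℝ)
        = ps (fun q => (μ ^ 2)⁻¹ • (Matrix.diagonal ![1, 1, 2 / a]).mulVec (κ q)) p
          + cross3 (κ p) ((μ ^ 2)⁻¹ • (Matrix.diagonal ![1, 1, 2 / a]).mulVec (κ p))
          + cross3 (τ0 p.1) (n p)) :
    ∀ p : ℝ × ℝ,
      pt (fun q => (1 / 2) * (v q ⬝ᵥ v q)
          + (2 * μ ^ 2)⁻¹ * (κ q ⬝ᵥ (Matrix.diagonal ![1, 1, 2 / a]).mulVec (κ q))
          + V (r q)) p
        = ps (fun q => v q ⬝ᵥ n q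
            + ω q ⬝ᵥ ((μ ^ 2)⁻¹ • (Matrix.diagonal ![1, 1, 2 / a]).mulVec (κ q))) p := by
  intro p
  have hrd := hr.differentiable one_ne_zero
  have hvd := hv.differentiable one_ne_zero
  have hωd := hω.differentiable one_ne_zero
  have hnd := hn.differentiable one_ne_zero
  have hκd := hκ.differentiable one_ne_zero
  set P : Matrix (Fin 3) (Fin 3) ℝ := Matrix.diagonal ![1, 1, 2 / a] with hP
  -- derivatives along the `t` direction
  have hvt := hasDerivAt_pt hvd p
  have hκt := hasDerivAt_pt hκd p
  have hrt := hasDerivAt_pt hrd p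
  -- derivatives along the `s` direction
  have hvs := hasDerivAt_ps hvd p
  have hns := hasDerivAt_ps hnd p
  have hωs := hasDerivAt_ps hωd p
  have hκs := hasDerivAt_ps hκd p
  -- derivative of the LHS energy density in time
  have hW :=
    (((hvt.dotp hvt).const_mul (1 / 2)).add
      ((hκt.dotp (hκt.matMulVec (A := P))).const_mul (2 * μ ^ 2)⁻¹)).add
      (hasDerivAt_compV hV hrt)
  have hLeq : pt (fun q => (1 / 2) * (v q ⬝ᵥ v q)
      + (2 * μ ^ 2)⁻¹ * (κ q ⬝ᵥ P.mulVec (κ q)) + V (r q)) p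
      = (1 / 2) * (pt v p ⬝ᵥ v p + v p ⬝ᵥ pt v p)
        + (2 * μ ^ 2)⁻¹ * (pt κ p ⬝ᵥ P.mulVec (κ p) + κ p ⬝ᵥ P.mulVec (pt κ p))
        + grad3 V (r p) ⬝ᵥ pt r p := hW.deriv
  -- derivative of the internal moment along `s`
  have hm := (hκs.matMulVec (A := P)).const_smul ((μ ^ 2)⁻¹ : ℝ)
  have hpsm : ps (fun q => (μ ^ 2)⁻¹ • P.mulVec (κ q)) p
      = (μ ^ 2)⁻¹ • P.mulVec (ps κ p) := hm.deriv
  -- derivative of the RHS flux in space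
  have hR := (hvs.dotp hns).add (hωs.dotp hm)
  have hReq : ps (fun q => v q ⬝ᵥ n q + ω q ⬝ᵥ ((μ ^ 2)⁻¹ • P.mulVec (κ q))) p
      = (ps v p ⬝ᵥ n p + v p ⬝ᵥ ps n p)
        + (ps ω p ⬝ᵥ ((μ ^ 2)⁻¹ • P.mulVec (κ p))
          + ω p ⬝ᵥ ((μ ^ 2)⁻¹ • P.mulVec (ps κ p))) := hR.deriv
  -- rearranged hypotheses
  have hpsv : ps v p = -(cross3 (κ p) (v p) + cross3 (τ0 p.1) (ω p)) := by
    have h : ps v p + (cross3 (κ p) (v p) + cross3 (τ0 p.1) (ω p)) = 0 := by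
      rw [← add_assoc]; exact (hconstr p).symm
    exact eq_neg_of_add_eq_zero_left h
  have hmang : (μ ^ 2)⁻¹ • P.mulVec (ps κ p)
      = -(cross3 (κ p) ((μ ^ 2)⁻¹ • P.mulVec (κ p)) + cross3 (τ0 p.1) (n p)) := by
    have h0 := hang p
    rw [hpsm] at h0
    have h : (μ ^ 2)⁻¹ • P.mulVec (ps κ p)
        + (cross3 (κ p) ((μ ^ 2)⁻¹ • P.mulVec (κ p)) + cross3 (τ0 p.1) (n p)) = 0 := by
      rw [← add_assoc]; exact h0.symm
    exact eq_neg_of_add_eq_zero_left h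
  -- kinematics: pt r = Dᵀ v
  have hDt : (D p)ᵀ * D p = 1 := mul_eq_one_comm.mp (hD p)
  have hptr : pt r p = (D p)ᵀ.mulVec (v p) := by
    have h := congrArg (fun x => (D p)ᵀ.mulVec x) (hkin p)
    simpa [Matrix.mulVec_mulVec, hDt] using h
  rw [hLeq, hReq, hlin p, hcompat p, hptr, hpsv, hmang]
  simp only [hP, cross3, dotProduct, Matrix.mulVec, Matrix.mulVec_diagonal, Matrix.diagonal_apply, Fin.isValue,
    Fin.sum_univ_three, Pi.add_apply, Pi.neg_apply, Pi.smul_apply, smul_eq_mul,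
    Matrix.cons_val_zero, Matrix.cons_val_one, Matrix.head_cons, Matrix.cons_val_two,
    Matrix.tail_cons, Matrix.transpose_apply]
  norm_num [Fin.ext_iff]
  ring
end
end
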